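/- Let A be a divisible additive commutative group, let f be an additive group endomorphism of A, and let F ∈ ℤ[X] be a polynomial with F(f) = 0 as an endomorphism of A and F(1) ≠ 0. Then for every a ∈ A there exists b ∈ A such that for all x ∈ A one has b + (a + f(x − b)) = f(x); that is, the conjugate T_b ∘ (T_a ∘ f) ∘ T_{−b} of the map x ↦ a + f(x) by the translation T_b equals the homomorphism f. -/

import Mathlib

open Polynomial

/-- If `F(f) = 0` with `F ∈ ℤ[X]`, `F(1) ≠ 0`, on a divisible abelian group, then for every
`a` there exists `b` such that `T_b ∘ (T_a ∘ f) ∘ T_{-b} = f`. -/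
theorem stmt_6 (A : Type*) [AddCommGroup A]
    (hdiv : ∀ n : ℤ, 0 < n → ∀ a : A, ∃ b : A, n • b = a)
    (f : AddMonoid.End A) (F : Polynomial ℤ)
    (hker : Polynomial.aeval f F = 0) (hF1 : F.eval 1 ≠ 0) :
    ∀ a : A, ∃ b : A, ∀ x : A, b + (a + f (x - b)) = f x := by
  intro a
  set n : ℤ := F.eval 1 with hn
  obtain ⟨G, hG⟩ : X - C (1 : ℤ) ∣ F - C n := X_sub_C_dvd_sub_C_eval
  -- apply aeval f
  have key : (aeval f) ((X - C (1 : ℤ)) * G) = 0 - n • 1 := by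
    rw [← hG, map_sub, hker, aeval_C]
    simp [Algebra.algebraMap_eq_smul_one]
  -- find c with n • c = -a
  obtain ⟨c, hc⟩ : ∃ c : A, n • c = -a := by
    rcases lt_or_gt_of_ne hF1 with h | h
    · obtain ⟨c, hc⟩ := hdiv (-n) (by omega) (-a)
      exact ⟨-c, by rw [← hc]; simp⟩
    · exact hdiv n h (-a)
  refine ⟨(aeval f) G c, fun x => ?_⟩
  have hb : (aeval f) G c - f ((aeval f) G c) = -a := by
    have h3 : f ((aeval f) G c) - (aeval f) G c = -(n • c) := by
      have h := congrArg (fun e : AddMonoid.End A => e c) key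
      simp only [map_mul, map_sub, aeval_X, aeval_C, AddMonoid.End.coe_mul,
        Function.comp_apply, AddMonoidHom.sub_apply, zero_sub,
        AddMonoidHom.neg_apply] at h
      have h4 : (-(n • (1 : AddMonoid.End A))) c = -(n • c) := rfl
      rw [h4] at h
      exact (by simpa [Algebra.algebraMap_eq_smul_one, AddMonoid.End.coe_one,
        AddMonoidHom.sub_apply] using h : (f - 1) ((aeval f) G c) = -(n • c))
    rw [← hc]
    linear_combination (norm := abel) -h3
  have hfx : f (x - (aeval f) G c) = f x - f ((aeval f) G c) := map_sub f _ _
  rw [hfx]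
  have : (aeval f) G c + a - f ((aeval f) G c) = 0 := by
    have := hb
    abel_nf
    abel_nf at this
    linear_combination (norm := abel) this
  linear_combination (norm := abel) this
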